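/- For the ideal I of n+1 almost collinear points with n ≥ 3, the resurgence ρ(I) = sup{ m/r : I^(m) ⊄ I^r } equals n²/(n² − n + 1). -/

import Mathlib

open MvPolynomial

set_option linter.unusedSectionVars false

noncomputable section Stmt5Aux

variable {K : Type*} [Field K]

section Vid
variable {σ : Type*} [DecidableEq σ]

open Finsupp in
/-- Ideal of polynomials all of whose monomials have weighted degree at least `k`. -/
def vid (K : Type*) [Field K] (w : σ → ℕ) (k : ℕ) : Ideal (MvPolynomial σ K) where
  carrier := {p | ∀ u ∈ p.support, k ≤ weight w u}
  zero_mem' := by simp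
  add_mem' := by
    intro a b ha hb u hu
    rcases Finset.mem_union.mp (MvPolynomial.support_add hu) with h | h
    · exact ha u h
    · exact hb u h
  smul_mem' := by
    intro c p hp u hu
    have := MvPolynomial.support_mul c p hu
    rw [Finset.mem_add] at this
    obtain ⟨a, ha, b, hb, rfl⟩ := this
    calc k ≤ weight w b := hp b hb
    _ ≤ weight w a + weight w b := Nat.le_add_left _ _
    _ = weight w (a + b) := (map_add _ _ _).symm

lemma mem_vid {w : σ → ℕ} {k : ℕ} {p : MvPolynomial σ K} :
    p ∈ vid K w k ↔ ∀ u ∈ p.support, k ≤ Finsupp.weight w u :=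
  Iff.rfl

lemma vid_mul {w : σ → ℕ} {a b : ℕ} {p q : MvPolynomial σ K}
    (hp : p ∈ vid K w a) (hq : q ∈ vid K w b) :
    p * q ∈ vid K w (a + b) := by
  intro u hu
  have := MvPolynomial.support_mul p q hu
  rw [Finset.mem_add] at this
  obtain ⟨x, hx, y, hy, rfl⟩ := this
  rw [map_add]
  exact Nat.add_le_add (hp x hx) (hq y hy)

lemma pow_le_vid {w : σ → ℕ} {a : ℕ} {J : Ideal (MvPolynomial σ K)}
    (h : J ≤ vid K w a) : ∀ r, J ^ r ≤ vid K w (r * a)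
  | 0 => by
      rw [pow_zero, Ideal.one_eq_top, zero_mul]
      intro p _ u _; exact Nat.zero_le _
  | (r+1) => by
      rw [pow_succ]
      refine Ideal.mul_le.mpr fun x hx y hy => ?_
      have := vid_mul (pow_le_vid h r hx) (h hy)
      rwa [show r * a + a = (r+1)*a by ring] at this

lemma homog_mem_vid {w : σ → ℕ} {k : ℕ} {p : MvPolynomial σ K}
    (hp : IsWeightedHomogeneous w p k) : p ∈ vid K w k := by
  intro u hu
  rw [hp (MvPolynomial.mem_support_iff.mp hu)]

end Vid

lemma prod_mem_pow {A : Type*} [CommRing A] {ι : Type*} (s : Finset ι) (g : ι → A) (e : ι → ℕ)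
    (J : Ideal A) (h : ∀ i ∈ s, g i ∈ J ^ e i) : (∏ i ∈ s, g i) ∈ J ^ (∑ i ∈ s, e i) := by
  classical
  induction s using Finset.induction_on with
  | empty => simp [Ideal.one_eq_top]
  | @insert i s hi ih =>
      rw [Finset.prod_insert hi, Finset.sum_insert hi, pow_add]
      exact Ideal.mul_mem_mul (h i (Finset.mem_insert_self i s))
        (ih fun j hj => h j (Finset.mem_insert_of_mem hj))

lemma prod_mem_pow_card {A : Type*} [CommRing A] {ι : Type*} (s : Finset ι) (g : ι → A)
    (J : Ideal A) (h : ∀ i ∈ s, g i ∈ J) : (∏ i ∈ s, g i) ∈ J ^ s.card := by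
  have := prod_mem_pow s g (fun _ => 1) J (by simpa [pow_one] using h)
  simpa using this

section Components
variable {σ : Type*} [DecidableEq σ]

lemma weight_one_apply (u : σ →₀ ℕ) :
    Finsupp.weight (fun _ : σ => (1:ℕ)) u = u.sum fun _ c => c := by
  rw [Finsupp.weight_apply]
  exact Finsupp.sum_congr fun i _ => by simp

lemma mem_pow_of_support {Q : Ideal (MvPolynomial σ K)} (hX : ∀ i : σ, X i ∈ Q)
    {k : ℕ} {p : MvPolynomial σ K}
    (h : ∀ u ∈ p.support, k ≤ Finsupp.weight (fun _ : σ => (1:ℕ)) u) : p ∈ Q ^ k := by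
  rw [← p.support_sum_monomial_coeff]
  refine Ideal.sum_mem _ fun u hu => ?_
  rw [monomial_eq]
  refine Ideal.mul_mem_left _ _ ?_
  have hmem : (u.prod fun i e => (X i : MvPolynomial σ K) ^ e) ∈ Q ^ (∑ i ∈ u.support, u i) :=
    prod_mem_pow u.support _ _ Q fun i _ => Ideal.pow_mem_pow (hX i) _
  refine Ideal.pow_le_pow_right ?_ hmem
  have := h u hu
  rwa [weight_one_apply] at this

lemma support_ge_iff_components {w : σ → ℕ} {k : ℕ} {p : MvPolynomial σ K} :
    (∀ u ∈ p.support, k ≤ Finsupp.weight w u) ↔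
      ∀ j < k, weightedHomogeneousComponent w j p = 0 := by
  constructor
  · intro h j hj
    ext d
    rw [coeff_weightedHomogeneousComponent, coeff_zero]
    split_ifs with hd
    · by_contra hc
      have := h d (mem_support_iff.mpr hc)
      omega
    · rfl
  · intro h u hu
    by_contra hc
    push_neg at hc
    have h0 := h _ hc
    have : coeff u (weightedHomogeneousComponent w (Finsupp.weight w u) p) = coeff u p := by
      rw [coeff_weightedHomogeneousComponent, if_pos rfl]
    rw [h0, coeff_zero] at this
    exact mem_support_iff.mp hu this.symm

lemma homog_sub {w : σ → ℕ} {m : ℕ} {p q : MvPolynomial σ K}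
    (hp : IsWeightedHomogeneous w p m) (hq : IsWeightedHomogeneous w q m) :
    IsWeightedHomogeneous w (p - q) m := by
  intro d hd
  rw [coeff_sub] at hd
  by_cases h1 : coeff d p ≠ 0
  · exact hp h1
  · push_neg at h1
    rw [h1, zero_sub, neg_ne_zero] at hd
    exact hq hd

lemma homog_pow {w : σ → ℕ} {m : ℕ} {p : MvPolynomial σ K}
    (hp : IsWeightedHomogeneous w p m) (e : ℕ) : IsWeightedHomogeneous w (p ^ e) (e * m) := by
  induction e with
  | zero => simpa using isWeightedHomogeneous_one K w
  | succ e ih =>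
      rw [pow_succ, add_one_mul]
      exact ih.mul hp

lemma wcomp_homog_mul {w : σ → ℕ} {ν : ℕ} {f : MvPolynomial σ K}
    (hf : IsWeightedHomogeneous w f ν) (h : MvPolynomial σ K) (k : ℕ) :
    weightedHomogeneousComponent w (ν + k) (f * h) =
      f * weightedHomogeneousComponent w k h := by
  induction h using MvPolynomial.induction_on' with
  | add p q hp hq => rw [mul_add, map_add, map_add, mul_add, hp, hq]
  | monomial u a =>
      have hmon : IsWeightedHomogeneous w (monomial u a) (Finsupp.weight w u) :=
        isWeightedHomogeneous_monomial w u a rfl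
      by_cases hu : Finsupp.weight w u = k
      · rw [IsWeightedHomogeneous.weightedHomogeneousComponent_same
            (by rw [← hu]; exact hf.mul hmon),
          IsWeightedHomogeneous.weightedHomogeneousComponent_same (hu ▸ hmon)]
      · rw [IsWeightedHomogeneous.weightedHomogeneousComponent_ne _ (hf.mul hmon)
            (by omega),
          IsWeightedHomogeneous.weightedHomogeneousComponent_ne _ hmon
            (fun hk => hu hk.symm), mul_zero]

end Components

end Stmt5Aux
noncomputable section Stmt5Fin2



variable {K : Type*} [Field K]

local notation "R2" => MvPolynomial (Fin 2) K

def Qxy (K : Type*) [Field K] : Ideal (MvPolynomial (Fin 2) K) := Ideal.span {X 0, X 1}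

lemma X_mem_Qxy (i : Fin 2) : (X i : R2) ∈ Qxy K := by
  fin_cases i
  · exact Ideal.subset_span (Set.mem_insert _ _)
  · exact Ideal.subset_span (Set.mem_insert_of_mem _ (Set.mem_singleton _))

lemma mem_Qxy_pow_iff {k : ℕ} {p : R2} :
    p ∈ Qxy K ^ k ↔ ∀ u ∈ p.support, k ≤ Finsupp.weight (fun _ : Fin 2 => (1:ℕ)) u := by
  constructor
  · intro hp
    have hQ : Qxy K ≤ vid K (fun _ : Fin 2 => (1:ℕ)) 1 := by
      rw [Qxy, Ideal.span_le]
      rintro x (rfl | rfl)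
      · exact homog_mem_vid (isWeightedHomogeneous_X K _ 0)
      · exact homog_mem_vid (isWeightedHomogeneous_X K _ 1)
    have := pow_le_vid hQ k hp
    rwa [mul_one] at this
  · exact mem_pow_of_support X_mem_Qxy

lemma mem_Qxy_pow_iff_components {k : ℕ} {p : R2} :
    p ∈ Qxy K ^ k ↔
      ∀ j < k, weightedHomogeneousComponent (fun _ : Fin 2 => (1:ℕ)) j p = 0 := by
  rw [mem_Qxy_pow_iff, support_ge_iff_components]

/-- dividing by a homogeneous polynomial drops the order accordingly -/
lemma div_mem_Qxy_pow {f h : R2} {ν m : ℕ}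
    (hf : IsWeightedHomogeneous (fun _ : Fin 2 => (1:ℕ)) f ν) (hf0 : f ≠ 0)
    (hm : f * h ∈ Qxy K ^ m) : h ∈ Qxy K ^ (m - ν) := by
  rw [mem_Qxy_pow_iff_components]
  intro j hj
  rw [mem_Qxy_pow_iff_components] at hm
  have h1 := hm (ν + j) (by omega)
  rw [wcomp_homog_mul hf h j] at h1
  exact (mul_eq_zero.mp h1).resolve_left hf0

end Stmt5Fin2
noncomputable section Stmt5Poly

variable {K : Type*} [Field K]

local notation "R2" => MvPolynomial (Fin 2) K
local notation "S2" => Polynomial (MvPolynomial (Fin 2) K)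

/-- p such that coeff d is divisible by f^(m-d) -/
def tid (f : R2) (m : ℕ) : Ideal S2 where
  carrier := {p | ∀ d, p.coeff d ∈ Ideal.span {f ^ (m - d)}}
  zero_mem' := by simp
  add_mem' := by
    intro a b ha hb d
    rw [Polynomial.coeff_add]
    exact Ideal.add_mem _ (ha d) (hb d)
  smul_mem' := by
    intro q p hp d
    rw [smul_eq_mul, Polynomial.coeff_mul]
    refine Ideal.sum_mem _ fun ij hij => ?_
    have hle : ij.2 ≤ d := by
      have := Finset.HasAntidiagonal.mem_antidiagonal.mp hij; omega
    refine Ideal.mul_mem_left _ _ ?_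
    refine Ideal.span_singleton_le_span_singleton.mpr (pow_dvd_pow f (by omega)) (hp ij.2)

lemma mem_tid {f : R2} {m : ℕ} {p : S2} :
    p ∈ tid f m ↔ ∀ d, p.coeff d ∈ Ideal.span {f ^ (m - d)} := Iff.rfl

lemma tid_mul {f : R2} {a b : ℕ} {p q : S2} (hp : p ∈ tid f a) (hq : q ∈ tid f b) :
    p * q ∈ tid f (a + b) := by
  intro d
  rw [Polynomial.coeff_mul]
  refine Ideal.sum_mem _ fun ij hij => ?_
  have hd := Finset.HasAntidiagonal.mem_antidiagonal.mp hij
  have h1 := Ideal.mul_mem_mul (hp ij.1) (hq ij.2)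
  rw [Ideal.span_singleton_mul_span_singleton, ← pow_add] at h1
  exact Ideal.span_singleton_le_span_singleton.mpr (pow_dvd_pow f (by omega)) h1

lemma span_XCf_le_tid (f : R2) : Ideal.span {Polynomial.X, Polynomial.C f} ≤ tid f 1 := by
  rw [Ideal.span_le]
  rintro x (rfl | rfl) <;> intro d
  · rw [Polynomial.coeff_X]
    split_ifs with h
    · subst h
      simp [Ideal.span_singleton_one]
    · exact Ideal.zero_mem _
  · rcases d with _ | d
    · rw [Polynomial.coeff_C_zero, pow_one]
      exact Ideal.mem_span_singleton_self f
    · rw [Polynomial.coeff_C]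
      simp [Ideal.span_singleton_one]

lemma span_XCf_pow_le_tid (f : R2) : ∀ m, (Ideal.span {Polynomial.X, Polynomial.C f})^m ≤ tid f m
  | 0 => by
      intro p _ d
      simp [Ideal.span_singleton_one]
  | (m+1) => by
      rw [pow_succ (M := Ideal S2)]
      refine Ideal.mul_le.mpr fun x hx y hy => ?_
      exact tid_mul (span_XCf_pow_le_tid f m hx) (span_XCf_le_tid f hy)

/-- the image of `I` in `S2` -/
def IS (f : R2) : Ideal S2 :=
  Ideal.span {Polynomial.C (X 0) * Polynomial.X, Polynomial.C (X 1) * Polynomial.X,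
    Polynomial.C f}

lemma CQ_mul_Xpow_mem (a : ℕ) :
    ∀ q ∈ Qxy K ^ a, Polynomial.C q * Polynomial.X ^ a ∈
      (Ideal.span {Polynomial.C (X 0 : R2) * Polynomial.X,
        Polynomial.C (X 1 : R2) * Polynomial.X})^a := by
  induction a with
  | zero => intro q _; simp
  | succ a ih =>
      intro q hq
      rw [pow_succ] at hq ⊢
      refine Submodule.mul_induction_on hq ?_ ?_
      · intro x hx y hy
        have hx' := ih x hx
        have hy' : Polynomial.C y * Polynomial.X ∈
            Ideal.span {Polynomial.C (X 0 : R2) * Polynomial.X,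
              Polynomial.C (X 1 : R2) * Polynomial.X} := by
          obtain ⟨u, v, huv⟩ := Ideal.mem_span_pair.mp hy
          have : Polynomial.C y * Polynomial.X =
              Polynomial.C u * (Polynomial.C (X 0 : R2) * Polynomial.X) +
              Polynomial.C v * (Polynomial.C (X 1 : R2) * Polynomial.X) := by
            rw [← huv]; push_cast [map_add, map_mul]; ring
          rw [this]
          exact Ideal.add_mem _
            (Ideal.mul_mem_left _ _ (Ideal.subset_span (Set.mem_insert _ _)))
            (Ideal.mul_mem_left _ _ (Ideal.subset_span (Set.mem_insert_of_mem _ (Set.mem_singleton _))))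
        have := Ideal.mul_mem_mul hx' hy'
        rwa [show Polynomial.C x * Polynomial.X ^ a * (Polynomial.C y * Polynomial.X) =
          Polynomial.C (x * y) * Polynomial.X ^ (a + 1) by
            rw [map_mul]; ring] at this
      · intro x y hx hy
        rw [map_add, add_mul]
        exact Ideal.add_mem _ hx hy

lemma rec_mem_IS {f : R2} {r : ℕ} (a d : ℕ) (had : a ≤ d) (har : a ≤ r) :
    ∀ g ∈ Ideal.span {f ^ (r - a)} * Qxy K ^ a,
      Polynomial.C g * Polynomial.X ^ d ∈ IS f ^ r := by
  intro g hg
  refine Submodule.mul_induction_on hg ?_ ?_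
  · intro x hx y hy
    obtain ⟨h, rfl⟩ := Ideal.mem_span_singleton'.mp hx
    have h1 : (Polynomial.C f)^(r-a) ∈ IS f ^ (r - a) :=
      Ideal.pow_mem_pow (Ideal.subset_span (by simp)) _
    have h2 : Polynomial.C y * Polynomial.X ^ a ∈ IS f ^ a := by
      refine Ideal.pow_right_mono ?_ a (CQ_mul_Xpow_mem a y hy)
      refine Ideal.span_mono ?_
      intro z hz
      rcases hz with rfl | rfl
      · exact Set.mem_insert _ _
      · exact Set.mem_insert_of_mem _ (Set.mem_insert _ _)
    have h3 := Ideal.mul_mem_mul h1 h2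
    rw [← pow_add (M := Ideal S2), Nat.sub_add_cancel har] at h3
    have h4 : Polynomial.C (h * f ^ (r-a) * y) * Polynomial.X ^ d =
        (Polynomial.C h * Polynomial.X ^ (d - a)) *
          ((Polynomial.C f)^(r-a) * (Polynomial.C y * Polynomial.X ^ a)) := by
      conv_lhs => rw [show d = d - a + a by omega]
      rw [map_mul, map_mul, map_pow, pow_add]
      ring
    rw [h4]
    exact Ideal.mul_mem_left _ _ h3
  · intro x y hx hy
    rw [map_add, add_mul]
    exact Ideal.add_mem _ hx hy

end Stmt5Poly
section Arith

lemma arith_key {n m r d : ℕ} (hn : 3 ≤ n) (hd : d < r) (hrm : r < m)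
    (hlt : r * n^2 < m * (n^2 - n + 1)) :
    d ≤ (m - r)*n + (m - (m - d)*n) := by
  have hn2 : n ≤ n^2 := by nlinarith
  by_cases hc : (m - d)*n ≤ m
  · -- second subtraction is exact
    have key : n * r ≤ m + (n-1)*d := by
      by_contra hk
      push_neg at hk
      -- m + (n-1)*d < n*r ; also (m-d)*n ≤ m i.e. n*m - n*d ≤ m
      zify [hn2, le_of_lt hrm, le_of_lt (lt_trans hd hrm), show 1 ≤ n by omega] at *
      nlinarith
    zify [hn2, le_of_lt hrm, le_of_lt (lt_trans hd hrm), hc, show 1 ≤ n by omega] at *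
    nlinarith
  · push_neg at hc
    have h2 : m - (m-d)*n = 0 := by omega
    rw [h2, add_zero]
    -- need d ≤ (m-r)*n, knowing m < (m-d)*n
    by_contra hk
    push_neg at hk
    zify [hn2, le_of_lt hrm, le_of_lt (lt_trans hd hrm), show 1 ≤ n by omega] at *
    nlinarith

end Arith
noncomputable section Stmt5PropA

variable {K : Type*} [Field K]

local notation "R2" => MvPolynomial (Fin 2) K

theorem propA {f : R2} {n : ℕ} (hn : 3 ≤ n) (hf0 : f ≠ 0)
    (hfh : IsWeightedHomogeneous (fun _ : Fin 2 => (1:ℕ)) f n) (hfQ : f ∈ Qxy K ^ n)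
    {m r : ℕ} (hm : 0 < m) (hr : 0 < r) (hlt : r * n^2 < m * (n^2 - n + 1)) :
    (Ideal.map (Polynomial.C : R2 →+* Polynomial R2) (Qxy K))^m ⊓
      (Ideal.span {Polynomial.X, Polynomial.C f})^m ≤ IS f ^ r := by
  have hn2 : n ≤ n^2 := by nlinarith
  have hrm : r < m := by
    have h1 : m * (n^2 - n + 1) ≤ m * n^2 := Nat.mul_le_mul_left m (by omega)
    have := lt_of_lt_of_le hlt h1
    exact lt_of_mul_lt_mul_right this (Nat.zero_le _)
  rintro p ⟨hp1, hp2⟩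
  have hq : ∀ d, p.coeff d ∈ Qxy K ^ m := by
    rw [← Ideal.map_pow] at hp1
    exact fun d => Ideal.mem_map_C_iff.mp hp1 d
  have hfc : ∀ d, p.coeff d ∈ Ideal.span {f ^ (m - d)} := span_XCf_pow_le_tid f m hp2
  -- decompose p into monomials
  rw [← Polynomial.sum_C_mul_X_pow_eq p]
  refine Ideal.sum_mem _ fun d _ => ?_
  set g := p.coeff d with hg
  by_cases hcase : r ≤ d
  · -- use a = r
    refine rec_mem_IS r d hcase le_rfl g ?_
    have : Ideal.span {f ^ (r - r)} * Qxy K ^ r = Qxy K ^ r := by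
      rw [Nat.sub_self, pow_zero, Ideal.span_singleton_one, Ideal.top_mul]
    rw [this]
    exact Ideal.pow_le_pow_right hrm.le (hq d)
  · push_neg at hcase  -- d < r
    have hdm : d < m := lt_trans hcase hrm
    obtain ⟨h, hh⟩ := Ideal.mem_span_singleton.mp (hfc d)
    -- g = f^(m-d) * h
    have hhQ : h ∈ Qxy K ^ (m - (m-d)*n) := by
      refine div_mem_Qxy_pow (homog_pow hfh (m-d)) (pow_ne_zero _ hf0) ?_
      rw [← hh]
      exact hq d
    refine rec_mem_IS d d le_rfl hcase.le g ?_
    -- decompose f^(m-d) = f^(r-d) * f^(m-r)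
    have hsplit : f ^ (m - d) = f ^ (r - d) * f ^ (m - r) := by
      rw [← pow_add]
      congr 1
      omega
    have hmem2 : f ^ (m - r) * h ∈ Qxy K ^ d := by
      have hfm : f ^ (m - r) ∈ Qxy K ^ ((m-r)*n) := by
        have := Ideal.pow_mem_pow hfQ (m - r)
        rwa [← pow_mul, mul_comm n (m-r)] at this
      have := Ideal.mul_mem_mul hfm hhQ
      rw [← pow_add] at this
      exact Ideal.pow_le_pow_right (arith_key hn hcase hrm hlt) this
    rw [hg, hh, hsplit]
    have : f ^ (r - d) * f ^ (m - r) * h = f ^ (r-d) * (f ^ (m-r) * h) := by ring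
    rw [this]
    exact Ideal.mul_mem_mul (Ideal.mem_span_singleton_self _) hmem2

end Stmt5PropA
noncomputable section Stmt5Fin3

variable {K : Type*} [Field K]

section Factors
variable {σ : Type*} [DecidableEq σ]

lemma factor_ne_zero {i j : σ} (hij : i ≠ j) (c : K) :
    (X i - MvPolynomial.C c * X j : MvPolynomial σ K) ≠ 0 := by
  intro h
  have h1 : coeff (Finsupp.single i 1) (X i - MvPolynomial.C c * X j : MvPolynomial σ K) = 1 := by
    rw [coeff_sub, coeff_C_mul, coeff_X', coeff_X', if_pos rfl, if_neg, mul_zero, sub_zero]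
    intro hs
    exact hij ((Finsupp.single_left_inj (one_ne_zero (α := ℕ))).mp hs).symm
  rw [h, coeff_zero] at h1
  exact one_ne_zero h1.symm

lemma factor_homog (w : σ → ℕ) {i j : σ} (hwi : w i = 1) (hwj : w j = 1) (c : K) :
    IsWeightedHomogeneous w (X i - MvPolynomial.C c * X j) 1 := by
  refine homog_sub ?_ ?_
  · simpa [hwi] using isWeightedHomogeneous_X K w i
  · have := (isWeightedHomogeneous_C w c).mul (isWeightedHomogeneous_X K w j)
    simpa [hwj] using this

lemma Fprod_ne_zero {n : ℕ} (c : Fin n → K) {i j : σ} (hij : i ≠ j) :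
    (∏ k : Fin n, (X i - MvPolynomial.C (c k) * X j) : MvPolynomial σ K) ≠ 0 :=
  Finset.prod_ne_zero_iff.mpr fun k _ => factor_ne_zero hij (c k)

lemma Fprod_homog {n : ℕ} (c : Fin n → K) (w : σ → ℕ) {i j : σ}
    (hwi : w i = 1) (hwj : w j = 1) :
    IsWeightedHomogeneous w (∏ k : Fin n, (X i - MvPolynomial.C (c k) * X j)) n := by
  have := IsWeightedHomogeneous.prod Finset.univ
    (fun k : Fin n => (X i - MvPolynomial.C (c k) * X j : MvPolynomial σ K)) (fun _ => 1)
    (w := w) (fun k _ => factor_homog w hwi hwj (c k))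
  simpa using this

lemma Fprod_mem {n : ℕ} (c : Fin n → K) {Q : Ideal (MvPolynomial σ K)} {i j : σ}
    (hi : X i ∈ Q) (hj : X j ∈ Q) :
    (∏ k : Fin n, (X i - MvPolynomial.C (c k) * X j)) ∈ Q ^ n := by
  have := prod_mem_pow_card (A := MvPolynomial σ K) Finset.univ
    (fun k : Fin n => (X i - MvPolynomial.C (c k) * X j)) Q
    (fun k _ => Ideal.sub_mem _ hi (Ideal.mul_mem_left _ _ hj))
  simpa using this

end Factors

theorem propB {n : ℕ} (hn : 3 ≤ n) (c : Fin n → K) {F3 : MvPolynomial (Fin 3) K}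
    (hF : F3 = ∏ i : Fin n, (X 0 - MvPolynomial.C (c i) * X 1)) (t : ℕ) (ht : 0 < t) :
    ∃ G, (G ∈ (Ideal.span {X 0, X 1} : Ideal (MvPolynomial (Fin 3) K))^(t*n^2) ⊓
        (Ideal.span {X 2, F3})^(t*n^2)) ∧
      G ∉ (Ideal.span {X 0 * X 2, X 1 * X 2, F3} : Ideal (MvPolynomial (Fin 3) K))^(t*(n^2-n+1)+1) := by
  have hn1 : 1 ≤ n := by omega
  have hn2 : n ≤ n^2 := by nlinarith
  set w3 : Fin 3 → ℕ := fun i => if i = 2 then n - 1 else 1 with hw3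
  have hw0 : w3 0 = 1 := by simp [hw3]
  have hw1 : w3 1 = 1 := by simp [hw3]
  have hw2 : w3 2 = n - 1 := by simp [hw3]
  have hjq : t*(n*(n-1)) + t*n = t*n^2 := by zify [hn1]; ring
  set j := t*(n*(n-1)) with hj
  refine ⟨X 2 ^ j * F3 ^ (t*n), ⟨?_, ?_⟩, ?_⟩
  · -- in (x,y)^{t n²}
    refine Ideal.mul_mem_left _ _ ?_
    have h1 : F3 ∈ (Ideal.span {X 0, X 1} : Ideal (MvPolynomial (Fin 3) K)) ^ n := by
      rw [hF]
      exact Fprod_mem c (Ideal.subset_span (Set.mem_insert _ _))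
        (Ideal.subset_span (Set.mem_insert_of_mem _ (Set.mem_singleton _)))
    have h2 := Ideal.pow_mem_pow h1 (t*n)
    rwa [← pow_mul, show n*(t*n) = t*n^2 by ring] at h2
  · -- in (z,F)^{t n²}
    have h1 : (X 2 : MvPolynomial (Fin 3) K) ^ j ∈ (Ideal.span {X 2, F3}) ^ j :=
      Ideal.pow_mem_pow (Ideal.subset_span (Set.mem_insert _ _)) _
    have h2 : F3 ^ (t*n) ∈ (Ideal.span {X 2, F3}) ^ (t*n) :=
      Ideal.pow_mem_pow (Ideal.subset_span (Set.mem_insert_of_mem _ (Set.mem_singleton _))) _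
    have h3 := Ideal.mul_mem_mul h1 h2
    rwa [← pow_add, hjq] at h3
  · -- not in I^{tq+1}
    intro hG
    have hIvid : (Ideal.span {X 0 * X 2, X 1 * X 2, F3} : Ideal (MvPolynomial (Fin 3) K)) ≤
        vid K w3 n := by
      rw [Ideal.span_le]
      rintro x (rfl | rfl | rfl)
      · have := homog_mem_vid ((isWeightedHomogeneous_X K w3 0).mul (isWeightedHomogeneous_X K w3 2))
        rwa [show w3 0 + w3 2 = n by rw [hw0, hw2]; omega] at this
      · have := homog_mem_vid ((isWeightedHomogeneous_X K w3 1).mul (isWeightedHomogeneous_X K w3 2))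
        rwa [show w3 1 + w3 2 = n by rw [hw1, hw2]; omega] at this
      · rw [hF]
        exact homog_mem_vid (Fprod_homog c w3 hw0 hw1)
    have hpow := pow_le_vid hIvid (t*(n^2-n+1)+1) hG
    -- G is weighted homogeneous of degree D
    have hGh : IsWeightedHomogeneous w3 (X 2 ^ j * F3 ^ (t*n) : MvPolynomial (Fin 3) K)
        (j*(n-1) + (t*n)*n) := by
      have h1 : IsWeightedHomogeneous w3 ((X 2 : MvPolynomial (Fin 3) K) ^ j) (j*(n-1)) := by
        have := homog_pow (isWeightedHomogeneous_X K w3 2) j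
        rwa [hw2] at this
      have h2 : IsWeightedHomogeneous w3 (F3 ^ (t*n)) ((t*n)*n) := by
        rw [hF]
        exact homog_pow (Fprod_homog c w3 hw0 hw1) (t*n)
      exact h1.mul h2
    have hG0 : (X 2 ^ j * F3 ^ (t*n) : MvPolynomial (Fin 3) K) ≠ 0 := by
      refine mul_ne_zero (pow_ne_zero _ (X_ne_zero _)) (pow_ne_zero _ ?_)
      rw [hF]
      exact Fprod_ne_zero c (by decide)
    obtain ⟨u, hu⟩ := exists_coeff_ne_zero hG0
    have hwu : Finsupp.weight w3 u = j*(n-1) + (t*n)*n := hGh hu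
    have hle := hpow u (mem_support_iff.mpr hu)
    rw [hwu] at hle
    have hlt : j*(n-1) + (t*n)*n < (t*(n^2-n+1)+1)*n := by
      zify [hn1, hn2, hj]
      nlinarith
    omega

end Stmt5Fin3
noncomputable section Stmt5Transfer

variable {K : Type*} [Field K]

/-- the ring equivalence sending x,y to constants and z to the polynomial variable -/
def Phi (K : Type*) [Field K] :
    MvPolynomial (Fin 3) K ≃+* Polynomial (MvPolynomial (Fin 2) K) :=
  ((renameEquiv K (finRotate 3)).trans (MvPolynomial.finSuccEquiv K 2)).toRingEquiv

lemma Phi_apply (p : MvPolynomial (Fin 3) K) :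
    Phi K p = MvPolynomial.finSuccEquiv K 2 (rename (finRotate 3) p) := rfl

lemma Phi_X0 : Phi K (X 0) = Polynomial.C (X 0) := by
  rw [Phi_apply, rename_X, show (finRotate 3) (0 : Fin 3) = Fin.succ 0 from by decide,
    finSuccEquiv_X_succ]

lemma Phi_X1 : Phi K (X 1) = Polynomial.C (X 1) := by
  rw [Phi_apply, rename_X, show (finRotate 3) (1 : Fin 3) = Fin.succ 1 from by decide,
    finSuccEquiv_X_succ]

lemma Phi_X2 : Phi K (X 2) = Polynomial.X := by
  rw [Phi_apply, rename_X, show (finRotate 3) (2 : Fin 3) = 0 from by decide,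
    finSuccEquiv_X_zero]

lemma Phi_C (a : K) : Phi K (MvPolynomial.C a) = Polynomial.C (MvPolynomial.C a) := by
  rw [Phi_apply, rename_C]
  have h2 := RingHom.congr_fun (MvPolynomial.finSuccEquiv_comp_C_eq_C (R := K) 2) a
  simp only [RingHom.coe_comp, RingHom.coe_coe, Function.comp_apply] at h2
  rw [← h2, AlgEquiv.apply_symm_apply]

lemma map_equiv_le_iff {A B : Type*} [CommRing A] [CommRing B] (e : A ≃+* B)
    {I J : Ideal A} :
    Ideal.map e I ≤ Ideal.map e J ↔ I ≤ J := by
  constructor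
  · intro h x hx
    have h1 : e x ∈ Ideal.map e I := Ideal.mem_map_of_mem _ hx
    have h2 := h h1
    rw [← Ideal.comap_symm] at h2
    have h3 := Ideal.mem_comap.mp h2
    simpa using h3
  · exact fun h => Ideal.map_mono h

lemma map_equiv_inf {A B : Type*} [CommRing A] [CommRing B] (e : A ≃+* B)
    (I J : Ideal A) :
    Ideal.map e (I ⊓ J) = Ideal.map e I ⊓ Ideal.map e J := by
  rw [← Ideal.comap_symm e (I := I ⊓ J), ← Ideal.comap_symm e (I := I),
    ← Ideal.comap_symm e (I := J)]
  exact Ideal.comap_inf (f := (e.symm : B ≃+* A)) I J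

end Stmt5Transfer
set_option maxHeartbeats 1000000
theorem stmt_5 {K : Type*} [Field K] (n : ℕ) (hn : 3 ≤ n)
    (c : Fin n → K) (hc : Function.Injective c) (hc0 : c ⟨0, by omega⟩ = 0)
    (F : MvPolynomial (Fin 3) K)
    (hF : F = ∏ i : Fin n, (X 0 - MvPolynomial.C (c i) * X 1))
    (I : Ideal (MvPolynomial (Fin 3) K))
    (hI : I = Ideal.span {X 0 * X 2, X 1 * X 2, F})
    (Isym : ℕ → Ideal (MvPolynomial (Fin 3) K))
    (hIsym : ∀ m, Isym m =
      (Ideal.span {X 0, X 1}) ^ m ⊓ (Ideal.span {X 2, F}) ^ m) :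
    sSup {x : ℝ | ∃ m r : ℕ, 0 < m ∧ 0 < r ∧ ¬ Isym m ≤ I ^ r ∧
        x = (m : ℝ) / r} =
      (n : ℝ) ^ 2 / ((n : ℝ) ^ 2 - n + 1) := by
  have hn1 : 1 ≤ n := by omega
  have hn2 : n ≤ n ^ 2 := by nlinarith
  set q : ℕ := n ^ 2 - n + 1 with hq
  have hqpos : 0 < q := Nat.succ_pos _
  set f2 : MvPolynomial (Fin 2) K := ∏ i : Fin n, (X 0 - MvPolynomial.C (c i) * X 1) with hf2
  have hf0 : f2 ≠ 0 := Fprod_ne_zero c (by decide)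
  have hfh : IsWeightedHomogeneous (fun _ : Fin 2 => (1:ℕ)) f2 n := Fprod_homog c _ rfl rfl
  have hfQ : f2 ∈ Qxy K ^ n := Fprod_mem c (X_mem_Qxy 0) (X_mem_Qxy 1)
  have hPhiF : Phi K F = Polynomial.C f2 := by
    rw [hF, map_prod, hf2, map_prod]
    refine Finset.prod_congr rfl fun i _ => ?_
    rw [map_sub, map_mul, Phi_X0, Phi_X1, Phi_C, map_sub, map_mul]
  have hmapIsym : ∀ m, Ideal.map (Phi K) (Isym m) =
      (Ideal.map (Polynomial.C : MvPolynomial (Fin 2) K →+* Polynomial (MvPolynomial (Fin 2) K))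
        (Qxy K)) ^ m ⊓ (Ideal.span {Polynomial.X, Polynomial.C f2}) ^ m := by
    intro m
    rw [hIsym m, map_equiv_inf, Ideal.map_pow, Ideal.map_pow]
    congr 2
    · rw [Ideal.map_span, Qxy, Ideal.map_span]
      congr 1
      rw [Set.image_insert_eq, Set.image_singleton, Set.image_insert_eq, Set.image_singleton,
        Phi_X0, Phi_X1]
    · rw [Ideal.map_span, Set.image_insert_eq, Set.image_singleton, Phi_X2, hPhiF]
  have hmapI : Ideal.map (Phi K) I = IS f2 := by
    rw [hI, Ideal.map_span, Set.image_insert_eq, Set.image_insert_eq, Set.image_singleton,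
      map_mul, map_mul, Phi_X0, Phi_X1, Phi_X2, hPhiF, IS]
  have HcontA : ∀ m r : ℕ, 0 < m → 0 < r → r * n ^ 2 < m * q → Isym m ≤ I ^ r := by
    intro m r hm hr hlt
    rw [← map_equiv_le_iff (Phi K), Ideal.map_pow, hmapI, hmapIsym]
    exact propA hn hf0 hfh hfQ hm hr hlt
  have HnonB : ∀ t : ℕ, 0 < t → ¬ Isym (t * n ^ 2) ≤ I ^ (t * q + 1) := by
    intro t ht hle
    obtain ⟨G, hG1, hG2⟩ := propB hn c hF t ht
    refine hG2 ?_
    rw [← hI]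
    refine hle ?_
    rw [hIsym]
    exact hG1
  -- real analysis
  have hcast : (q : ℝ) = (n : ℝ) ^ 2 - (n : ℝ) + 1 := by
    rw [hq, Nat.cast_add, Nat.cast_sub hn2]
    push_cast
    ring
  have hden : (0 : ℝ) < (n : ℝ) ^ 2 - (n : ℝ) + 1 := by
    rw [← hcast]
    exact_mod_cast hqpos
  have hnpos : 0 < n ^ 2 := by positivity
  refine csSup_eq_of_forall_le_of_forall_lt_exists_gt ?_ ?_ ?_
  · exact ⟨((1 * n ^ 2 : ℕ) : ℝ) / ((1 * q + 1 : ℕ) : ℝ), 1 * n ^ 2, 1 * q + 1,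
      by omega, by omega, HnonB 1 one_pos, rfl⟩
  · rintro x ⟨m, r, hm, hr, hnc, rfl⟩
    have hle : m * q ≤ r * n ^ 2 := by
      by_contra hlt
      push_neg at hlt
      exact hnc (HcontA m r hm hr hlt)
    rw [div_le_div_iff₀ (by exact_mod_cast hr) hden]
    calc (m : ℝ) * ((n:ℝ) ^ 2 - n + 1) = (m : ℝ) * q := by rw [hcast]
    _ ≤ (r : ℝ) * (n:ℝ) ^ 2 := by exact_mod_cast hle
    _ = (n:ℝ) ^ 2 * r := by ring
  · intro w hw
    obtain ⟨t0, ht0⟩ := exists_nat_gt (w / ((n : ℝ) ^ 2 - w * q))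
    set t : ℕ := t0 + 1 with htdef
    have htpos : 0 < t := Nat.succ_pos t0
    refine ⟨((t * n ^ 2 : ℕ) : ℝ) / ((t * q + 1 : ℕ) : ℝ),
      ⟨t * n ^ 2, t * q + 1, by positivity, by omega, HnonB t htpos, rfl⟩, ?_⟩
    have hrpos : (0:ℝ) < ((t * q + 1 : ℕ) : ℝ) := by positivity
    have ht1 : (1:ℝ) ≤ (t:ℝ) := by exact_mod_cast htpos
    have hn3 : (3:ℝ) ≤ (n:ℝ) := by exact_mod_cast hn
    have hgoal : w * ((t:ℝ) * (q:ℝ) + 1) < (t:ℝ) * (n:ℝ) ^ 2 := by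
      by_cases hw0 : w ≤ 0
      · have h1 : (0:ℝ) < (t:ℝ) * (n:ℝ)^2 := by nlinarith
        have h2 : w * ((t:ℝ) * (q:ℝ) + 1) ≤ 0 := by
          apply mul_nonpos_of_nonpos_of_nonneg hw0
          have hq0 : (0:ℝ) ≤ (q:ℝ) := Nat.cast_nonneg q
          nlinarith
        linarith
      · push_neg at hw0
        have hwq : w * (q:ℝ) < (n:ℝ) ^ 2 := by
          rw [← hcast] at hw
          exact (lt_div_iff₀ (by exact_mod_cast hqpos)).mp hw
        have hpos : (0:ℝ) < (n:ℝ) ^ 2 - w * q := by linarith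
        have h1 : w < (t0 : ℝ) * ((n:ℝ) ^ 2 - w * q) := by
          have := (div_lt_iff₀ hpos).mp ht0
          linarith [this]
        have h2 : (t : ℝ) = (t0 : ℝ) + 1 := by rw [htdef]; push_cast; ring
        nlinarith [hpos, h1, h2, hw0]
    rw [lt_div_iff₀ hrpos]
    calc w * ((t * q + 1 : ℕ) : ℝ) = w * ((t:ℝ) * (q:ℝ) + 1) := by push_cast; ring
    _ < (t:ℝ) * (n:ℝ) ^ 2 := hgoal
    _ = ((t * n ^ 2 : ℕ) : ℝ) := by push_cast; ring
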